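/- arXiv:2405.03811 — 4 statements merged into one kernel-verified Lean document; each statement's English description precedes it below -/
import Mathlib

section
/- If (X, μ) is a probability space and (A_q)_{q∈ℕ} is a sequence of measurable subsets of X such that 0 < Σ_{q=1}^∞ μ(A_q) < ∞, then μ(⋃_{q=1}^∞ A_q) ≥ (Σ_{q=1}^∞ μ(A_q))² / Σ_{q,r=1}^∞ μ(A_q ∩ A_r). -/
open MeasureTheory ENNReal

/-- **Chung–Erdős lemma.** If `(X, μ)` is a probability space and `(A q)` a sequence of
measurable sets with `0 < ∑ μ(A q) < ∞`, then
`μ(⋃ A q) ≥ (∑ μ(A q))² / ∑_{q,r} μ(A q ∩ A r)`. -/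
theorem chung_erdos {X : Type*} [MeasurableSpace X] (μ : Measure X) [IsProbabilityMeasure μ]
    (A : ℕ → Set X) (hA : ∀ q, MeasurableSet (A q))
    (hpos : 0 < ∑' q : ℕ, μ (A q)) (hfin : ∑' q : ℕ, μ (A q) < ⊤) :
    (∑' q : ℕ, μ (A q)) ^ 2 / (∑' p : ℕ × ℕ, μ (A p.1 ∩ A p.2)) ≤ μ (⋃ q : ℕ, A q) := by
  set f : X → ℝ≥0∞ := fun x => ∑' q : ℕ, (A q).indicator 1 x with hfdef
  set g : X → ℝ≥0∞ := (⋃ q, A q).indicator 1 with hgdef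
  have hfm : Measurable f :=
    Measurable.ennreal_tsum fun q => measurable_one.indicator (hA q)
  have hgm : Measurable g := measurable_one.indicator (MeasurableSet.iUnion hA)
  -- f vanishes off the union, so f * g = f
  have hfg : ∀ x, f x * g x = f x := by
    intro x
    by_cases hx : x ∈ ⋃ q, A q
    · simp [hgdef, Set.indicator_of_mem hx]
    · have : f x = 0 := by
        have : ∀ q, (A q).indicator (1 : X → ℝ≥0∞) x = 0 := fun q =>
          Set.indicator_of_notMem (fun h => hx (Set.mem_iUnion.2 ⟨q, h⟩)) _
        simp [hfdef, this]
      simp [this]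
  -- ∫ f = ∑ μ (A q)
  have hS : ∫⁻ x, f x ∂μ = ∑' q : ℕ, μ (A q) := by
    rw [hfdef]
    rw [lintegral_tsum fun q => (measurable_one.indicator (hA q)).aemeasurable]
    simp_rw [lintegral_indicator_one (hA _)]
  -- ∫ f² = ∑_{q,r} μ (A q ∩ A r)
  have hT : ∫⁻ x, f x ^ (2 : ℝ) ∂μ = ∑' p : ℕ × ℕ, μ (A p.1 ∩ A p.2) := by
    have hsq : ∀ x, f x ^ (2 : ℝ) = ∑' p : ℕ × ℕ, (A p.1 ∩ A p.2).indicator 1 x := by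
      intro x
      have h2 : f x ^ (2 : ℝ) = f x * f x := by
        rw [show (2 : ℝ) = ((2 : ℕ) : ℝ) by norm_num, ENNReal.rpow_natCast, sq]
      rw [h2, hfdef]
      calc (∑' q : ℕ, (A q).indicator (1 : X → ℝ≥0∞) x) * (∑' r : ℕ, (A r).indicator 1 x)
          = ∑' q : ℕ, (A q).indicator (1 : X → ℝ≥0∞) x * ∑' r : ℕ, (A r).indicator 1 x :=
            ENNReal.tsum_mul_right.symm
        _ = ∑' (q : ℕ) (r : ℕ), (A q).indicator (1 : X → ℝ≥0∞) x * (A r).indicator 1 x :=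
            tsum_congr fun q => ENNReal.tsum_mul_left.symm
        _ = ∑' p : ℕ × ℕ, (A p.1).indicator (1 : X → ℝ≥0∞) x * (A p.2).indicator 1 x :=
            ENNReal.tsum_prod.symm
        _ = ∑' p : ℕ × ℕ, (A p.1 ∩ A p.2).indicator 1 x := by
            refine tsum_congr fun p => ?_
            rw [← Set.inter_indicator_mul]
            norm_num
            rfl
    simp_rw [hsq]
    rw [lintegral_tsum (fun (p : ℕ × ℕ) =>
      (measurable_one.indicator ((hA p.1).inter (hA p.2))).aemeasurable)]
    simp_rw [lintegral_indicator_one ((hA _).inter (hA _))]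
  -- ∫ g² = μ (⋃ A q)
  have hU : ∫⁻ x, g x ^ (2 : ℝ) ∂μ = μ (⋃ q, A q) := by
    have : ∀ x, g x ^ (2 : ℝ) = g x := by
      intro x
      by_cases hx : x ∈ ⋃ q, A q
      · simp [hgdef, Set.indicator_of_mem hx]
      · simp [hgdef, Set.indicator_of_notMem hx, ENNReal.zero_rpow_of_pos, (by norm_num : (0:ℝ) < 2)]
    simp_rw [this, hgdef]
    exact lintegral_indicator_one (MeasurableSet.iUnion hA)
  -- Cauchy–Schwarz
  have hconj : Real.HolderConjugate 2 2 := Real.HolderConjugate.two_two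
  have hcs := ENNReal.lintegral_mul_le_Lp_mul_Lq μ hconj hfm.aemeasurable hgm.aemeasurable
  rw [show (fun x => (f * g) x) = fun x => f x  from funext hfg] at hcs
  rw [hS, hT, hU] at hcs
  have hsq : (∑' q : ℕ, μ (A q)) ^ 2 ≤
      (∑' p : ℕ × ℕ, μ (A p.1 ∩ A p.2)) * μ (⋃ q, A q) := by
    calc (∑' q : ℕ, μ (A q)) ^ 2
        ≤ ((∑' p : ℕ × ℕ, μ (A p.1 ∩ A p.2)) ^ (1 / 2 : ℝ) *
            μ (⋃ q, A q) ^ (1 / 2 : ℝ)) ^ 2 := by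
          exact pow_le_pow_left₀ (zero_le) hcs 2
      _ = _ := by
          rw [mul_pow, ← ENNReal.rpow_natCast (_ ^ (1/2:ℝ)), ← ENNReal.rpow_natCast (_ ^ (1/2:ℝ)),
            ← ENNReal.rpow_mul, ← ENNReal.rpow_mul]
          norm_num
  exact ENNReal.div_le_of_le_mul (hsq.trans_eq (mul_comm _ _))
end

section
/- Let (X, μ) be a probability space and (A_{d,q})_{d,q≥1} a doubly-indexed collection of measurable sets such that for every d ≥ 1, Σ_{q=1}^∞ μ(A_{d,q}) < ∞, while Σ_{d=1}^∞ Σ_{q=1}^∞ μ(A_{d,q}) = ∞. If there exists a constant C ≥ 0 such that for infinitely many D, Σ over pairs (k,q),(ℓ,r) with k,ℓ ≤ D of μ(A_{k,q} ∩ A_{ℓ,r}) ≤ C (Σ over pairs (d,q) with d ≤ D of μ(A_{d,q}))², then the limsup of the family (A_{d,q}) as d,q → ∞ has μ-measure at least 1/C. -/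
open MeasureTheory Filter
open scoped ENNReal
open scoped Topology

lemma chung_erdos_s2 {X : Type*} [MeasurableSpace X] (μ : Measure X) {ι : Type*}
    (s : Finset ι) (B : ι → Set X) (hB : ∀ i, MeasurableSet (B i)) :
    (∑ i ∈ s, μ (B i)) ^ 2 ≤ μ (⋃ i ∈ s, B i) * ∑ i ∈ s, ∑ j ∈ s, μ (B i ∩ B j) := by
  classical
  set f : X → ℝ≥0∞ := fun x => ∑ i ∈ s, (B i).indicator 1 x with hf_def
  have hfm : Measurable f := by
    apply Finset.measurable_sum
    intro i _
    exact (measurable_one.indicator (hB i))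
  set U : Set X := ⋃ i ∈ s, B i with hU_def
  have hUm : MeasurableSet U :=
    MeasurableSet.biUnion s.countable_toSet (fun i _ => hB i)
  have h1 : ∫⁻ x, f x ∂μ = ∑ i ∈ s, μ (B i) := by
    rw [hf_def]
    rw [lintegral_finset_sum _ (fun i _ => measurable_one.indicator (hB i))]
    exact Finset.sum_congr rfl fun i _ => lintegral_indicator_one (hB i)
  have h2 : ∫⁻ x, f x ^ 2 ∂μ = ∑ i ∈ s, ∑ j ∈ s, μ (B i ∩ B j) := by
    have : ∀ x, f x ^ 2 = ∑ i ∈ s, ∑ j ∈ s, ((B i ∩ B j).indicator 1 x) := by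
      intro x
      rw [sq, hf_def, Finset.sum_mul_sum]
      refine Finset.sum_congr rfl fun i _ => Finset.sum_congr rfl fun j _ => ?_
      rw [Set.inter_indicator_one]
      rfl
    simp_rw [this]
    rw [lintegral_finset_sum _ (fun i _ => Finset.measurable_sum _
      (fun j _ => measurable_one.indicator ((hB i).inter (hB j))))]
    refine Finset.sum_congr rfl fun i _ => ?_
    rw [lintegral_finset_sum _ (fun j _ => measurable_one.indicator ((hB i).inter (hB j)))]
    exact Finset.sum_congr rfl fun j _ => lintegral_indicator_one ((hB i).inter (hB j))
  set g : X → ℝ≥0∞ := U.indicator 1 with hg_def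
  have hsupp : ∀ x, f x = (f * g) x := by
    intro x
    by_cases hx : x ∈ U
    · simp [hg_def, Set.indicator_of_mem hx]
    · have : f x = 0 := by
        rw [hf_def]
        refine Finset.sum_eq_zero fun i hi => ?_
        refine Set.indicator_of_notMem (fun hxi => hx ?_) _
        exact Set.mem_biUnion hi hxi
      simp [Pi.mul_apply, this]
  have hCS := ENNReal.lintegral_mul_le_Lp_mul_Lq μ
    ((Real.holderConjugate_iff_eq_conjExponent (by norm_num)).mpr (by norm_num) : (2:ℝ).HolderConjugate 2) hfm.aemeasurable
    (show Measurable g from measurable_one.indicator hUm).aemeasurable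
  have hind : ∀ x, g x ^ (2:ℝ) = g x := by
    intro x; by_cases h : x ∈ U <;> simp [hg_def, h]
  have hfr : ∀ x, f x ^ (2:ℝ) = f x ^ 2 := by
    intro x; rw [← ENNReal.rpow_natCast]; norm_num
  simp_rw [hind, hfr] at hCS
  have hgint : ∫⁻ x, g x ∂μ = μ U := lintegral_indicator_one hUm
  rw [hgint] at hCS
  have key : ∫⁻ x, f x ∂μ ≤ (∫⁻ x, f x ^ 2 ∂μ) ^ (1/2 : ℝ) * μ U ^ (1/2 : ℝ) := by
    calc ∫⁻ x, f x ∂μ = ∫⁻ x, (f * g) x ∂μ := lintegral_congr hsupp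
      _ ≤ _ := hCS
  have := pow_le_pow_left₀ zero_le key 2
  rw [h1] at this
  refine this.trans (le_of_eq ?_)
  rw [mul_pow, ← ENNReal.rpow_natCast ((∫⁻ x, f x ^ 2 ∂μ) ^ (1/2:ℝ)),
    ← ENNReal.rpow_natCast (μ U ^ (1/2:ℝ)), ← ENNReal.rpow_mul, ← ENNReal.rpow_mul]
  norm_num [h2, mul_comm]

/-- Doubly-indexed quasi-independence-on-average Borel–Cantelli: if each row sum
`∑_q μ(A d q)` is finite, the total sum diverges, and for infinitely many `D` the
quasi-independence bound holds with constant `C`, then the set of points belonging to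
infinitely many of the `A d q` has measure at least `1/C`. -/
theorem quasi_independent_double_borel_cantelli {X : Type*} [MeasurableSpace X]
    (μ : Measure X) [IsProbabilityMeasure μ]
    (A : ℕ → ℕ → Set X) (hA : ∀ d q, MeasurableSet (A d q))
    (hrow : ∀ d : ℕ, ∑' q : ℕ, μ (A d q) < ⊤)
    (hdiv : ∑' d : ℕ, ∑' q : ℕ, μ (A d q) = ⊤) (C : ℝ≥0∞)
    (hC : ∃ᶠ D in atTop,
      ∑ k ∈ Finset.range D, ∑ l ∈ Finset.range D, ∑' q : ℕ, ∑' r : ℕ, μ (A k q ∩ A l r)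
        ≤ C * (∑ d ∈ Finset.range D, ∑' q : ℕ, μ (A d q)) ^ 2) :
    1 / C ≤ μ {x | {p : ℕ × ℕ | x ∈ A p.1 p.2}.Infinite} := by
  classical
  set T : ℕ → ℝ≥0∞ := fun D => ∑ k ∈ Finset.range D, ∑' q, μ (A k q) with hT_def
  set P : ℕ → ℝ≥0∞ :=
    fun D => ∑ k ∈ Finset.range D, ∑ l ∈ Finset.range D, ∑' q, ∑' r, μ (A k q ∩ A l r) with hP_def
  have hTfin : ∀ D, T D ≠ ⊤ := by
    intro D
    rw [hT_def]
    exact (ENNReal.sum_lt_top.mpr fun k _ => hrow k).ne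
  have hTmono : Monotone T := by
    intro a b hab
    exact Finset.sum_le_sum_of_subset (Finset.range_subset_range.mpr hab)
  have hTtop : Tendsto T atTop (𝓝 ⊤) := by
    rw [← hdiv]
    exact ENNReal.tendsto_nat_tsum _
  have hPT : ∀ D, T D ≤ P D := by
    intro D
    refine Finset.sum_le_sum fun k hk => ?_
    calc ∑' q, μ (A k q) ≤ ∑' q, ∑' r, μ (A k q ∩ A k r) := by
          refine ENNReal.tsum_le_tsum fun q => ?_
          have := ENNReal.le_tsum (f := fun r => μ (A k q ∩ A k r)) q
          simpa using this
      _ ≤ ∑ l ∈ Finset.range D, ∑' q, ∑' r, μ (A k q ∩ A l r) := by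
          exact Finset.single_le_sum (f := fun l => ∑' q, ∑' r, μ (A k q ∩ A l r))
            (fun l _ => zero_le) hk
  -- case C = ⊤
  rcases eq_or_ne C ⊤ with rfl | hCtop
  · simp
  have hC0 : C ≠ 0 := by
    rintro rfl
    have hev : ∀ᶠ D in atTop, 1 ≤ T D :=
      hTtop.eventually (eventually_ge_nhds (by norm_num : (1:ℝ≥0∞) < ⊤))
    obtain ⟨D, hPD, hTD⟩ := (hC.and_eventually hev).exists
    rw [zero_mul] at hPD
    exact absurd (le_trans hTD ((hPT D).trans hPD)) (by norm_num)
  set U : ℕ → Set X :=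
    fun N => ⋃ p : ℕ × ℕ, ⋃ (_ : p ∉ Finset.range N ×ˢ Finset.range N), A p.1 p.2 with hU_def
  have hUm : ∀ N, MeasurableSet (U N) := by
    intro N
    exact MeasurableSet.iUnion fun p => MeasurableSet.iUnion fun _ => hA p.1 p.2
  have hUanti : Antitone U := by
    intro a b hab x hx
    simp only [hU_def, Set.mem_iUnion] at hx ⊢
    obtain ⟨p, hp, hxp⟩ := hx
    refine ⟨p, fun hmem => hp ?_, hxp⟩
    simp only [Finset.mem_product, Finset.mem_range] at hmem ⊢
    exact ⟨hmem.1.trans_le hab, hmem.2.trans_le hab⟩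
  have hEU : {x | {p : ℕ × ℕ | x ∈ A p.1 p.2}.Infinite} = ⋂ N, U N := by
    ext x
    simp only [Set.mem_setOf_eq, Set.mem_iInter, hU_def, Set.mem_iUnion]
    constructor
    · intro hinf N
      have : ¬ {p : ℕ × ℕ | x ∈ A p.1 p.2} ⊆ ↑(Finset.range N ×ˢ Finset.range N) := by
        intro hsub
        exact hinf ((Finset.range N ×ˢ Finset.range N).finite_toSet.subset hsub)
      obtain ⟨p, hp1, hp2⟩ := Set.not_subset.mp this
      exact ⟨p, hp2, hp1⟩
    · intro h hfin
      set M := hfin.toFinset.sup (fun p => max p.1 p.2) + 1 with hM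
      obtain ⟨p, hp, hxp⟩ := h M
      refine hp ?_
      have hpS : p ∈ hfin.toFinset := hfin.mem_toFinset.mpr hxp
      have h1 := Finset.le_sup (f := fun p : ℕ × ℕ => max p.1 p.2) hpS
      have h2 : p.1 ≤ hfin.toFinset.sup (fun p => max p.1 p.2) :=
        le_trans (le_max_left _ _) h1
      have h3 : p.2 ≤ hfin.toFinset.sup (fun p => max p.1 p.2) :=
        le_trans (le_max_right _ _) h1
      simp only [Finset.mem_product, Finset.mem_range]
      constructor <;> omega
  have hmeas : μ {x | {p : ℕ × ℕ | x ∈ A p.1 p.2}.Infinite} = ⨅ N, μ (U N) := by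
    rw [hEU]
    exact Directed.measure_iInter (fun N => (hUm N).nullMeasurableSet)
      (hUanti.directed_ge) ⟨0, measure_ne_top μ _⟩
  rw [hmeas]
  refine le_iInf fun N => ?_
  rw [ENNReal.div_le_iff hC0 hCtop]
  by_contra hlt
  push_neg at hlt
  set m := μ (U N) with hm_def
  set c : ℝ≥0∞ := ∑ k ∈ Finset.range N, ∑ q ∈ Finset.range N, μ (A k q) with hc_def
  have hcT : ∀ D, N ≤ D → c ≤ T D := by
    intro D hD
    calc c ≤ T N := Finset.sum_le_sum fun k _ => ENNReal.sum_le_tsum _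
      _ ≤ T D := hTmono hD
  have hcfin : c ≠ ⊤ := fun h => hTfin N (top_le_iff.mp (h ▸ hcT N le_rfl))
  have key : ∀ D, N ≤ D → (T D - c) ^ 2 ≤ m * P D := by
    intro D hD
    have hstep : ∀ Q, N ≤ Q →
        ((∑ k ∈ Finset.range D, ∑ q ∈ Finset.range Q, μ (A k q)) - c) ^ 2 ≤ m * P D := by
      intro Q hQ
      set full : Finset (ℕ × ℕ) := Finset.range D ×ˢ Finset.range Q with hfull_def
      set sQ : Finset (ℕ × ℕ) := full \ (Finset.range N ×ˢ Finset.range N) with hsQ_def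
      have hFsub : Finset.range N ×ˢ Finset.range N ⊆ full :=
        Finset.product_subset_product (Finset.range_subset_range.mpr hD) (Finset.range_subset_range.mpr hQ)
      have hce := chung_erdos_s2 μ sQ (fun p => A p.1 p.2) (fun p => hA p.1 p.2)
      have hcF : c = ∑ p ∈ Finset.range N ×ˢ Finset.range N, μ (A p.1 p.2) := by
        rw [hc_def, Finset.sum_product]
      have hsum : ∑ p ∈ sQ, μ (A p.1 p.2) + c = ∑ p ∈ full, μ (A p.1 p.2) := by
        rw [hcF]
        exact Finset.sum_sdiff hFsub
      have hfull : ∑ p ∈ full, μ (A p.1 p.2)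
          = ∑ k ∈ Finset.range D, ∑ q ∈ Finset.range Q, μ (A k q) := Finset.sum_product _ _ _
      have hS : (∑ k ∈ Finset.range D, ∑ q ∈ Finset.range Q, μ (A k q)) - c
          ≤ ∑ p ∈ sQ, μ (A p.1 p.2) := by
        rw [← hfull, ← hsum]
        exact tsub_le_iff_right.mpr le_rfl
      have hUb : μ (⋃ p ∈ sQ, A p.1 p.2) ≤ m := by
        rw [hm_def]
        apply measure_mono
        intro x hx
        simp only [Set.mem_iUnion, hU_def] at hx ⊢
        obtain ⟨p, hp, hxp⟩ := hx
        exact ⟨p, (Finset.mem_sdiff.mp hp).2, hxp⟩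
      have hP2 : ∑ p ∈ sQ, ∑ p' ∈ sQ, μ (A p.1 p.2 ∩ A p'.1 p'.2) ≤ P D := by
        calc ∑ p ∈ sQ, ∑ p' ∈ sQ, μ (A p.1 p.2 ∩ A p'.1 p'.2)
            ≤ ∑ p ∈ sQ, ∑ p' ∈ full, μ (A p.1 p.2 ∩ A p'.1 p'.2) :=
              Finset.sum_le_sum fun p _ => Finset.sum_le_sum_of_subset Finset.sdiff_subset
          _ ≤ ∑ p ∈ full, ∑ p' ∈ full, μ (A p.1 p.2 ∩ A p'.1 p'.2) :=
              Finset.sum_le_sum_of_subset Finset.sdiff_subset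
          _ = ∑ k ∈ Finset.range D, ∑ q ∈ Finset.range Q, ∑ l ∈ Finset.range D,
                ∑ r ∈ Finset.range Q, μ (A k q ∩ A l r) := by
              rw [hfull_def, Finset.sum_product]
              exact Finset.sum_congr rfl fun k _ => Finset.sum_congr rfl fun q _ =>
                Finset.sum_product _ _ _
          _ ≤ P D := by
              refine Finset.sum_le_sum fun k _ => ?_
              rw [Finset.sum_comm]
              refine Finset.sum_le_sum fun l _ => ?_
              calc ∑ q ∈ Finset.range Q, ∑ r ∈ Finset.range Q, μ (A k q ∩ A l r)
                  ≤ ∑ q ∈ Finset.range Q, ∑' r, μ (A k q ∩ A l r) :=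
                    Finset.sum_le_sum fun q _ => ENNReal.sum_le_tsum _
                _ ≤ ∑' q, ∑' r, μ (A k q ∩ A l r) := ENNReal.sum_le_tsum _
      calc ((∑ k ∈ Finset.range D, ∑ q ∈ Finset.range Q, μ (A k q)) - c) ^ 2
          ≤ (∑ p ∈ sQ, μ (A p.1 p.2)) ^ 2 := pow_le_pow_left₀ zero_le hS 2
        _ ≤ μ (⋃ p ∈ sQ, A p.1 p.2) * ∑ p ∈ sQ, ∑ p' ∈ sQ, μ (A p.1 p.2 ∩ A p'.1 p'.2) := hce
        _ ≤ m * P D := mul_le_mul' hUb hP2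
    have h1 : Tendsto (fun Q => ∑ k ∈ Finset.range D, ∑ q ∈ Finset.range Q, μ (A k q))
        atTop (𝓝 (T D)) := by
      rw [hT_def]
      exact tendsto_finset_sum _ (fun k _ => ENNReal.tendsto_nat_tsum _)
    have htend : Tendsto
        (fun Q => ((∑ k ∈ Finset.range D, ∑ q ∈ Finset.range Q, μ (A k q)) - c) ^ 2)
        atTop (𝓝 ((T D - c) ^ 2)) :=
      ENNReal.Tendsto.pow (n := 2) (ENNReal.Tendsto.sub h1 tendsto_const_nhds (Or.inl (hTfin D)))
    exact le_of_tendsto htend (eventually_atTop.mpr ⟨N, hstep⟩)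
  -- combine with hC frequently and T → ⊤ to get contradiction
  have hK : m * C ≠ ⊤ := hlt.ne_top
  set k := (m * C).toReal with hk_def
  set c' := c.toReal with hc'_def
  have hk1 : k < 1 := by
    have h := (ENNReal.toReal_lt_toReal hK ENNReal.one_ne_top).mpr hlt
    rwa [ENNReal.toReal_one] at h
  have hk0 : 0 ≤ k := ENNReal.toReal_nonneg
  have hc0 : 0 ≤ c' := ENNReal.toReal_nonneg
  set R : ℝ := (2 * c' + 1) / (1 - k) with hR_def
  have hRpos : 0 < R := div_pos (by linarith) (by linarith)
  have hRk : R * (1 - k) = 2 * c' + 1 := div_mul_cancel₀ _ (by linarith)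
  have hfreq := hC.and_eventually ((eventually_ge_atTop N).and
    (hTtop.eventually (eventually_ge_nhds (ENNReal.ofReal_lt_top (r := R)))))
  obtain ⟨D, hCD, hND, hRD⟩ := hfreq.exists
  have h1 : (T D - c) ^ 2 ≤ (m * C) * T D ^ 2 := by
    calc (T D - c) ^ 2 ≤ m * P D := key D hND
      _ ≤ m * (C * T D ^ 2) := mul_le_mul_right hCD m
      _ = (m * C) * T D ^ 2 := by ring
  have hTDfin := hTfin D
  have hRHSfin : (m * C) * T D ^ 2 ≠ ⊤ := ENNReal.mul_ne_top hK (ENNReal.pow_ne_top hTDfin)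
  have h2 := ENNReal.toReal_mono hRHSfin h1
  rw [ENNReal.toReal_mul, ENNReal.toReal_pow, ENNReal.toReal_pow,
    ENNReal.toReal_sub_of_le (hcT D hND) hTDfin] at h2
  set t := (T D).toReal with ht_def
  have hRt : R ≤ t := (ENNReal.ofReal_le_iff_le_toReal hTDfin).mp hRD
  have ht0 : 0 < t := lt_of_lt_of_le hRpos hRt
  have h3 : 2 * c' + 1 ≤ (1 - k) * t := by
    have := mul_le_mul_of_nonneg_left hRt (by linarith : (0:ℝ) ≤ 1 - k)
    nlinarith
  nlinarith [mul_le_mul_of_nonneg_right h3 ht0.le, h2, sq_nonneg c', sq_nonneg t]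
end

section
/- Fix m ≥ 1. For every ball W ⊂ 𝕋^m there exists Q ≥ 1 such that for all integers q ≥ Q, all radii r ≥ 0, and all v ∈ ℝ^m, Leb(E_{1,m}(q,r,v) ∩ W) ≥ (1/2) Leb(E_{1,m}(q,r,v)) Leb(W), where E_{1,m}(q,r,v) = {x ∈ 𝕋^m : qx ∈ B(v,r) mod 1} is the set of points x in the torus for which qx lies in the ball of radius r centered at v modulo ℤ^m. -/
open MeasureTheory
open scoped ENNReal

/-- The set `E_{1,m}(q,r,v) = {x ∈ 𝕋^m : q·x ∈ B(v,r) mod ℤ^m}`: points of the torus whose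
`q`-th multiple lies within distance `r` of `v` modulo `ℤ^m` (max-norm distance). -/
def gridSet (m q : ℕ) (r : ℝ) (v : Fin m → ℝ) : Set (Fin m → AddCircle (1:ℝ)) :=
  {x | dist (fun j => (q : ℤ) • x j) (fun j => ((v j : ℝ) : AddCircle (1:ℝ))) ≤ r}

open Set

/-- For a `1/q`-periodic set `S ⊆ ℝ`, the measure of `S ∩ (a, a + n/q]` is `n` times the
measure of one cell `S ∩ (a, a + 1/q]`. -/
private lemma periodic_cell_measure (S : Set ℝ) (hS : MeasurableSet S) (q : ℕ) (hq : 1 ≤ q)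
    (hper : ∀ x : ℝ, x + 1/q ∈ S ↔ x ∈ S) (a : ℝ) (n : ℕ) :
    volume (S ∩ Ioc a (a + n/q)) = n * volume (S ∩ Ioc a (a + 1/q)) := by
  have hq0 : (0:ℝ) < q := by exact_mod_cast Nat.pos_of_ne_zero (by omega)
  have hpern : ∀ (j : ℕ) (x : ℝ), x + j/q ∈ S ↔ x ∈ S := by
    intro j
    induction j with
    | zero => simp
    | succ j ih =>
      intro x
      have hx : x + (j+1 : ℕ)/q = (x + j/q) + 1/q := by push_cast; ring
      rw [hx, hper, ih]
  induction n with
  | zero => simp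
  | succ n ih =>
    have hnn : (0:ℝ) ≤ (n:ℝ)/q := by positivity
    have h1q : (0:ℝ) ≤ 1/q := by positivity
    have hstep : (n+1 : ℕ)/(q:ℝ) = (n:ℝ)/q + 1/q := by push_cast; ring
    have hsplit : Ioc a (a + ((n+1:ℕ):ℝ)/q)
        = Ioc a (a + (n:ℝ)/q) ∪ Ioc (a + (n:ℝ)/q) (a + ((n+1:ℕ):ℝ)/q) := by
      rw [Set.Ioc_union_Ioc_eq_Ioc (by linarith) (by rw [hstep]; linarith)]
    have htrans : volume (S ∩ Ioc (a + (n:ℝ)/q) (a + ((n+1:ℕ):ℝ)/q))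
        = volume (S ∩ Ioc a (a + 1/q)) := by
      have hpre : (fun x : ℝ => x + (n:ℝ)/q) ⁻¹' (S ∩ Ioc (a + (n:ℝ)/q) (a + ((n+1:ℕ):ℝ)/q))
          = S ∩ Ioc a (a + 1/q) := by
        ext x
        simp only [mem_preimage, mem_inter_iff, mem_Ioc, hpern n x]
        rw [hstep]
        constructor
        · rintro ⟨h1, h2, h3⟩; exact ⟨h1, by linarith, by linarith⟩
        · rintro ⟨h1, h2, h3⟩; exact ⟨h1, by linarith, by linarith⟩
      rw [← hpre, measure_preimage_add_right]
    have hdisj : Disjoint (S ∩ Ioc a (a + (n:ℝ)/q))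
        (S ∩ Ioc (a + (n:ℝ)/q) (a + ((n+1:ℕ):ℝ)/q)) :=
      (Set.Ioc_disjoint_Ioc_of_le le_rfl).mono inter_subset_right inter_subset_right
    rw [hsplit, Set.inter_union_distrib_left,
      measure_union hdisj (hS.inter measurableSet_Ioc), ih, htrans]
    push_cast
    ring

/-- The key one-dimensional estimate: if `S ⊆ 𝕋` is measurable and invariant under translation
by `1/q`, then for any ball of radius `ρ` and any `k ≤ q` with `k/q < 2ρ`, we have
`(k/q)·μ(S) ≤ μ(S ∩ B)`. -/
private lemma oneD_estimate (S : Set (AddCircle (1:ℝ))) (hS : MeasurableSet S) (q : ℕ)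
    (hq : 1 ≤ q)
    (hinv : ∀ x : ℝ, ((x + 1/q : ℝ) : AddCircle (1:ℝ)) ∈ S ↔ ((x : ℝ) : AddCircle (1:ℝ)) ∈ S)
    (c : AddCircle (1:ℝ)) (ρ : ℝ) (k : ℕ) (hkρ : (k:ℝ)/q < 2*ρ) (hkq : k ≤ q) :
    ENNReal.ofReal ((k:ℝ)/q) * volume S ≤ volume (S ∩ Metric.ball c ρ) := by
  have hq0 : (0:ℝ) < q := by exact_mod_cast Nat.pos_of_ne_zero (by omega)
  obtain ⟨c', rfl⟩ : ∃ x : ℝ, (x : AddCircle (1:ℝ)) = c := Quotient.exists_rep c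
  set a : ℝ := c' - (k:ℝ)/(2*q) with ha
  clear_value a
  set S' : Set ℝ := QuotientAddGroup.mk ⁻¹' S with hS'def
  have hS' : MeasurableSet S' := hS.preimage (AddCircle.measurable_mk')
  have hper : ∀ x : ℝ, x + 1/q ∈ S' ↔ x ∈ S' := fun x => hinv x
  have hcell := periodic_cell_measure S' hS' q hq hper a
  -- total measure of S
  have htot : volume S = (q:ℝ≥0∞) * volume (S' ∩ Ioc a (a + 1/q)) := by
    have h1 : a + 1 = a + (q:ℝ)/q := by rw [div_self hq0.ne']
    rw [AddCircle.add_projection_respects_measure 1 a hS, h1, ← hS'def, hcell q]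
  -- halving identity
  have hhalf : (k:ℝ)/(2*q) + (k:ℝ)/(2*q) = (k:ℝ)/q := by
    field_simp
    ring
  -- inclusion of the collection of cells into S ∩ ball
  have hsub : S' ∩ Ioc a (a + (k:ℝ)/q)
      ⊆ (QuotientAddGroup.mk ⁻¹' (S ∩ Metric.ball ((c' : ℝ) : AddCircle (1:ℝ)) ρ))
        ∩ Ioc a (a + 1) := by
    rintro x ⟨hxS, hx1, hx2⟩
    have hkq' : (k:ℝ)/q ≤ 1 := by
      rw [div_le_one hq0]; exact_mod_cast hkq
    refine ⟨⟨hxS, ?_⟩, hx1, by linarith⟩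
    have hd : dist ((x : ℝ) : AddCircle (1:ℝ)) ((c' : ℝ) : AddCircle (1:ℝ)) ≤ |x - c'| := by
      rw [dist_eq_norm, ← AddCircle.coe_sub, ← Real.norm_eq_abs]
      exact QuotientAddGroup.norm_mk_le_norm
    have habs : |x - c'| < ρ := by
      rw [abs_sub_lt_iff]
      constructor <;> [skip; skip] <;>
        · simp only [ha] at hx1 hx2
          linarith
    exact Metric.mem_ball.mpr (lt_of_le_of_lt hd habs)
  -- put it together
  have hqinv : ((q:ℝ≥0∞))⁻¹ * (q:ℝ≥0∞) = 1 :=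
    ENNReal.inv_mul_cancel (by exact_mod_cast Nat.pos_of_ne_zero (by omega) : 0 < ((q:ℕ):ℝ≥0∞)).ne'
      (ENNReal.natCast_ne_top q)
  calc ENNReal.ofReal ((k:ℝ)/q) * volume S
      = (k:ℝ≥0∞) * (q:ℝ≥0∞)⁻¹ * ((q:ℝ≥0∞) * volume (S' ∩ Ioc a (a + 1/q))) := by
        rw [htot, ENNReal.ofReal_div_of_pos hq0, ENNReal.ofReal_natCast,
          ENNReal.ofReal_natCast, ENNReal.div_eq_inv_mul, mul_comm ((q:ℝ≥0∞))⁻¹]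
    _ = (k:ℝ≥0∞) * volume (S' ∩ Ioc a (a + 1/q)) := by
        rw [mul_assoc, ← mul_assoc ((q:ℝ≥0∞))⁻¹, hqinv, one_mul]
    _ = volume (S' ∩ Ioc a (a + (k:ℝ)/q)) := (hcell k).symm
    _ ≤ volume ((QuotientAddGroup.mk ⁻¹' (S ∩ Metric.ball ((c' : ℝ) : AddCircle (1:ℝ)) ρ))
          ∩ Ioc a (a + 1)) := measure_mono hsub
    _ = volume (S ∩ Metric.ball ((c' : ℝ) : AddCircle (1:ℝ)) ρ) :=
        (AddCircle.add_projection_respects_measure 1 a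
          (hS.inter Metric.isOpen_ball.measurableSet)).symm

/-- The key elementary inequality: `L^m ≤ 2 (k/q)^m` under the stated hypotheses. -/
private lemma key_real_ineq (m q k : ℕ) (hm : 1 ≤ m) (L : ℝ) (hL0 : 0 < L)
    (hqL : 2*(m:ℝ) ≤ (q:ℝ)*L) (hk : (q:ℝ)*L - 1 ≤ (k:ℝ)) (hq0 : (0:ℝ) < q) :
    L^m ≤ 2*((k:ℝ)/q)^m := by
  have hm1 : (1:ℝ) ≤ m := by exact_mod_cast hm
  have hqL0 : (0:ℝ) < (q:ℝ)*L := by linarith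
  have hqL2 : (2:ℝ) ≤ (q:ℝ)*L := by linarith
  have hinv : 1/((q:ℝ)*L) ≤ 1/2 := by
    apply one_div_le_one_div_of_le <;> linarith
  have hminv : (m:ℝ)*(1/((q:ℝ)*L)) ≤ 1/2 := by
    have : (m:ℝ)/((q:ℝ)*L) ≤ (m:ℝ)/(2*(m:ℝ)) := by
      apply div_le_div_of_nonneg_left (by linarith) (by linarith) hqL
    have hmm : (m:ℝ)/(2*(m:ℝ)) = 1/2 := by
      field_simp
    rw [mul_one_div]
    linarith [this, hmm ▸ this]
  have hfac0 : (0:ℝ) ≤ 1 - 1/((q:ℝ)*L) := by linarith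
  -- Bernoulli
  have hbern : 1 - (m:ℝ)*(1/((q:ℝ)*L)) ≤ (1 - 1/((q:ℝ)*L))^m := by
    have := one_add_mul_le_pow (a := -(1/((q:ℝ)*L))) (by linarith) m
    simpa [sub_eq_add_neg, mul_neg] using this
  have hpow_half : (1/2:ℝ) ≤ (1 - 1/((q:ℝ)*L))^m := by linarith
  have hLfac : L*(1 - 1/((q:ℝ)*L)) = L - 1/q := by
    field_simp
  have hlow : L - 1/q ≤ (k:ℝ)/q := by
    have heq : ((q:ℝ)*L - 1)/q = L - 1/q := by
      field_simp
    rw [← heq]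
    exact div_le_div_of_nonneg_right hk hq0.le
  have h1 : (L*(1 - 1/((q:ℝ)*L)))^m ≤ ((k:ℝ)/q)^m := by
    apply pow_le_pow_left₀ (by positivity)
    rw [hLfac]; exact hlow
  have h2 : L^m * (1 - 1/((q:ℝ)*L))^m ≤ ((k:ℝ)/q)^m := by
    rwa [← mul_pow]
  nlinarith [pow_nonneg hL0.le m, pow_nonneg hfac0 m,
    mul_le_mul_of_nonneg_left hpow_half (pow_nonneg hL0.le m)]

set_option maxHeartbeats 1000000 in
/-- **Uniformity of grid sets.** Fix `m ≥ 1`. For every ball `W ⊆ 𝕋^m` there exists `Q ≥ 1`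
such that for all `q ≥ Q`, all radii `r ≥ 0`, and all `v ∈ ℝ^m`,
`Leb(E_{1,m}(q,r,v) ∩ W) ≥ (1/2)·Leb(E_{1,m}(q,r,v))·Leb(W)`. -/
theorem gridSet_uniform (m : ℕ) (hm : 1 ≤ m) (c : Fin m → AddCircle (1:ℝ)) (ρ : ℝ) :
    ∃ Q : ℕ, 1 ≤ Q ∧ ∀ q : ℕ, Q ≤ q → ∀ r : ℝ, 0 ≤ r → ∀ v : Fin m → ℝ,
      volume (gridSet m q r v) * volume (Metric.ball c ρ) / 2
        ≤ volume (gridSet m q r v ∩ Metric.ball c ρ) := by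
  by_cases hρ : 0 < ρ
  case neg =>
    refine ⟨1, le_refl 1, fun q hq r hr v => ?_⟩
    have : Metric.ball c ρ = ∅ := Metric.ball_eq_empty.mpr (not_lt.mp hρ)
    simp [this]
  case pos =>
  set L : ℝ := min 1 (2*ρ) with hLdef
  have hL0 : 0 < L := lt_min one_pos (by linarith)
  have hL1 : L ≤ 1 := min_le_left _ _
  have hL2ρ : L ≤ 2*ρ := min_le_right _ _
  refine ⟨max 1 ⌈2*(m:ℝ)/L⌉₊, le_max_left _ _, fun q hq r hr v => ?_⟩
  have hq1 : 1 ≤ q := le_trans (le_max_left _ _) hq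
  have hq0 : (0:ℝ) < q := by exact_mod_cast Nat.pos_of_ne_zero (by omega)
  have hqL : 2*(m:ℝ) ≤ (q:ℝ)*L := by
    have h1 : ⌈2*(m:ℝ)/L⌉₊ ≤ q := le_trans (le_max_right _ _) hq
    have h2 : 2*(m:ℝ)/L ≤ (q:ℝ) := le_trans (Nat.le_ceil _) (by exact_mod_cast h1)
    rw [div_le_iff₀ hL0] at h2
    linarith
  -- the cell count k
  set k : ℕ := ⌈(q:ℝ)*L⌉₊ - 1 with hkdef
  have hm1 : (1:ℝ) ≤ (m:ℝ) := by exact_mod_cast hm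
  have hceil1 : 1 ≤ ⌈(q:ℝ)*L⌉₊ := Nat.one_le_ceil_iff.mpr (by nlinarith)
  have hkub : (k:ℝ) < (q:ℝ)*L := by
    have : k < ⌈(q:ℝ)*L⌉₊ := by omega
    exact_mod_cast Nat.lt_ceil.mp this
  have hklb : (q:ℝ)*L - 1 ≤ (k:ℝ) := by
    have : ((k:ℕ):ℝ) = (⌈(q:ℝ)*L⌉₊ : ℝ) - 1 := by
      rw [hkdef]
      push_cast [Nat.cast_sub hceil1]
      ring
    rw [this]
    linarith [Nat.le_ceil ((q:ℝ)*L)]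
  have hkq : k ≤ q := by
    have : (k:ℝ) < (q:ℝ) := by nlinarith
    exact_mod_cast this.le
  have hkρ : (k:ℝ)/q < 2*ρ := by
    rw [div_lt_iff₀ hq0]
    nlinarith
  -- the one-dimensional component sets
  set Sj : Fin m → Set (AddCircle (1:ℝ)) :=
    fun j => (fun y : AddCircle (1:ℝ) => (q:ℤ) • y) ⁻¹'
      Metric.closedBall ((v j : ℝ) : AddCircle (1:ℝ)) r with hSjdef
  have hSj_meas : ∀ j, MeasurableSet (Sj j) := fun j =>
    Metric.isClosed_closedBall.measurableSet.preimage (continuous_zsmul ((q:ℤ))).measurable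
  have hSj_inv : ∀ j, ∀ x : ℝ,
      ((x + 1/q : ℝ) : AddCircle (1:ℝ)) ∈ Sj j ↔ ((x : ℝ) : AddCircle (1:ℝ)) ∈ Sj j := by
    intro j x
    have h1 : (q:ℤ) • (x + 1/q : ℝ) = (q:ℤ) • x + 1 := by
      simp only [zsmul_eq_mul, Int.cast_natCast]
      field_simp
    have key : (q:ℤ) • ((x + 1/q : ℝ) : AddCircle (1:ℝ))
        = (q:ℤ) • ((x : ℝ) : AddCircle (1:ℝ)) := by
      rw [← AddCircle.coe_zsmul, ← AddCircle.coe_zsmul, h1, AddCircle.coe_add,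
        AddCircle.coe_period, add_zero]
    simp only [hSjdef, mem_preimage, key]
  -- decompose everything as products
  have hE : gridSet m q r v = Set.pi univ Sj := by
    ext x
    simp only [gridSet, mem_setOf_eq, Set.mem_pi, mem_univ, true_implies, hSjdef,
      mem_preimage, Metric.mem_closedBall]
    exact dist_pi_le_iff hr
  have hW : Metric.ball c ρ = Set.pi univ fun j => Metric.ball (c j) ρ := ball_pi _ hρ
  rw [hE, hW, ← Set.pi_inter_distrib, volume_pi_pi, volume_pi_pi, volume_pi_pi]
  -- reduce to the multiplicative inequality
  rw [ENNReal.div_le_iff (by norm_num) (by norm_num)]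
  have hball_le : ∀ j, volume (Metric.ball (c j) ρ) ≤ ENNReal.ofReal L := by
    intro j
    calc volume (Metric.ball (c j) ρ) ≤ volume (Metric.closedBall (c j) ρ) :=
          measure_mono Metric.ball_subset_closedBall
      _ = ENNReal.ofReal (min 1 (2*ρ)) := AddCircle.volume_closedBall 1 ρ
  have honeD : ∀ j, ENNReal.ofReal ((k:ℝ)/q) * volume (Sj j)
      ≤ volume (Sj j ∩ Metric.ball (c j) ρ) := fun j =>
    oneD_estimate (Sj j) (hSj_meas j) q hq1 (hSj_inv j) (c j) ρ k hkρ hkq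
  calc (∏ j, volume (Sj j)) * ∏ j, volume (Metric.ball (c j) ρ)
      ≤ (∏ j, volume (Sj j)) * ∏ _j : Fin m, ENNReal.ofReal L :=
        by gcongr with j; exact hball_le j
    _ = (∏ j, volume (Sj j)) * ENNReal.ofReal (L^m) := by
        rw [Finset.prod_const, Finset.card_univ, Fintype.card_fin,
          ← ENNReal.ofReal_pow hL0.le]
    _ ≤ (∏ j, volume (Sj j)) * ENNReal.ofReal (2*((k:ℝ)/q)^m) :=
        by gcongr; exact key_real_ineq m q k hm L hL0 hqL hklb hq0
    _ = ((∏ j, volume (Sj j)) * ENNReal.ofReal (((k:ℝ)/q)^m)) * 2 := by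
        rw [ENNReal.ofReal_mul (by norm_num), ENNReal.ofReal_ofNat]
        ring
    _ = (∏ j, ENNReal.ofReal ((k:ℝ)/q) * volume (Sj j)) * 2 := by
        rw [Finset.prod_mul_distrib, Finset.prod_const, Finset.card_univ, Fintype.card_fin,
          ← ENNReal.ofReal_pow (by positivity)]
        ring
    _ ≤ (∏ j, volume (Sj j ∩ Metric.ball (c j) ρ)) * 2 :=
        by gcongr with j; exact honeD j
end

section
/- Let m, n ≥ 1 and for each q ∈ ℤ₊^n let P(gcd(q)) ⊂ (ℝ/gcd(q)ℤ)^m be a finite set, with P(q) its lift to ℝ^m. If q₁, q₂ ∈ ℤ₊^n are linearly independent over ℝ and each set A_{1,m}^P(gcd(q_i), r_i) ⊂ 𝕋^m (i=1,2) is a union of pairwise disjoint balls, then Leb(A_{n,m}^P(q₁,r₁) ∩ A_{n,m}^P(q₂,r₂)) = Leb(A_{n,m}^P(q₁,r₁)) · Leb(A_{n,m}^P(q₂,r₂)); i.e., the two sets are independent. -/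
open MeasureTheory
open scoped ENNReal
open Function

/-- The lift to `ℝ^m` of the finite set `P d ⊆ (ℝ/dℤ)^m` (given by representatives). -/
def liftSet (m : ℕ) (P : ℕ → Finset (Fin m → ℝ)) (d : ℕ) : Set (Fin m → ℝ) :=
  {x | ∃ p ∈ P d, ∃ k : Fin m → ℤ, x = p + (d : ℝ) • fun j => ((k j : ℤ) : ℝ)}

/-- `A_{n,m}^P(q,r) ⊆ 𝕋^{nm}`: matrices `X` with `qX ∈ B(0,r) + P(q)` (max-norm ball). -/
def approxSet (m n : ℕ) (P : ℕ → Finset (Fin m → ℝ)) (q : Fin n → ℕ) (r : ℝ) :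
    Set (Fin n → Fin m → AddCircle (1:ℝ)) :=
  {X | ∃ Y : Fin n → Fin m → ℝ, (∀ i j, ((Y i j : ℝ) : AddCircle (1:ℝ)) = X i j) ∧
    ∃ z ∈ liftSet m P (Finset.univ.gcd q), ‖(fun j => ∑ i, (q i : ℝ) * Y i j) - z‖ ≤ r}

/-- Bezout for finsets of naturals. -/
lemma finset_gcd_bezout {ι : Type*} [DecidableEq ι] (K : Finset ι) (c : ι → ℕ) :
    ∃ e : ι → ℤ, ∑ i ∈ K, (c i : ℤ) * e i = ((K.gcd c : ℕ) : ℤ) := by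
  induction K using Finset.induction_on with
  | empty => exact ⟨0, by simp⟩
  | insert a K ha ih =>
    obtain ⟨e, he⟩ := ih
    set g : ℕ := K.gcd c with hg
    refine ⟨fun i => if i = a then Nat.gcdA (c a) g else Nat.gcdB (c a) g * e i, ?_⟩
    rw [Finset.sum_insert ha, Finset.gcd_insert]
    have hKsum : ∑ i ∈ K, (c i : ℤ) * (if i = a then Nat.gcdA (c a) g else Nat.gcdB (c a) g * e i)
        = Nat.gcdB (c a) g * ∑ i ∈ K, (c i : ℤ) * e i := by
      rw [Finset.mul_sum]
      refine Finset.sum_congr rfl fun i hi => ?_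
      have : i ≠ a := fun h => ha (h ▸ hi)
      simp only [if_neg this]; ring
    have hgcd : gcd (c a) g = Nat.gcd (c a) g := rfl
    simp only [if_pos rfl, hKsum, he, hgcd]
    have := Nat.gcd_eq_gcd_ab (c a) g
    push_cast
    linarith [this]

/-- From a linearly independent pair get a dual vector. -/
lemma exists_dual_vec {n : ℕ} (f₁ f₂ : Fin n → ℝ)
    (h : ∀ s t : ℝ, s • f₁ + t • f₂ = 0 → s = 0 ∧ t = 0) :
    ∃ a : Fin n → ℝ, ∑ i, f₁ i * a i = 1 ∧ ∑ i, f₂ i * a i = 0 := by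
  set s11 : ℝ := ∑ i, f₁ i * f₁ i with hs11
  set s12 : ℝ := ∑ i, f₁ i * f₂ i with hs12
  set s22 : ℝ := ∑ i, f₂ i * f₂ i with hs22
  have hs22pos : 0 < s22 := by
    have hf2 : f₂ ≠ 0 := by
      intro h2
      have := (h 0 1 (by simp [h2])).2
      norm_num at this
    rcases Function.ne_iff.1 hf2 with ⟨i, hi⟩
    simp only [Pi.zero_apply] at hi
    exact Finset.sum_pos' (fun j _ => mul_self_nonneg _)
      ⟨i, Finset.mem_univ i, mul_self_pos.2 hi⟩
  set det : ℝ := s11 * s22 - s12 * s12 with hdet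
  have hgne : (fun i => s22 * f₁ i - s12 * f₂ i) ≠ 0 := by
    intro h0
    have : s22 • f₁ + (-s12) • f₂ = 0 := by
      funext i
      have := congrFun h0 i
      simp only [Pi.zero_apply] at this ⊢
      simp [smul_eq_mul]; linarith
    exact absurd (h _ _ this).1 (ne_of_gt hs22pos)
  have hsumsq : ∑ i, (s22 * f₁ i - s12 * f₂ i)^2 = s22 * det := by
    have expand : ∀ i : Fin n, (s22 * f₁ i - s12 * f₂ i)^2
        = s22^2 * (f₁ i * f₁ i) - (2*s22*s12) * (f₁ i * f₂ i) + s12^2 * (f₂ i * f₂ i) :=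
      fun i => by ring
    rw [Finset.sum_congr rfl (fun i _ => expand i)]
    rw [Finset.sum_add_distrib, Finset.sum_sub_distrib, ← Finset.mul_sum, ← Finset.mul_sum,
      ← Finset.mul_sum, ← hs11, ← hs12, ← hs22, hdet]
    ring
  have hdetpos : 0 < det := by
    rcases Function.ne_iff.1 hgne with ⟨i, hi⟩
    simp only [Pi.zero_apply] at hi
    have hpos : 0 < ∑ i, (s22 * f₁ i - s12 * f₂ i)^2 :=
      Finset.sum_pos' (fun j _ => sq_nonneg _) ⟨i, Finset.mem_univ i, by positivity⟩
    nlinarith [hpos, hsumsq, hs22pos]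
  refine ⟨fun i => (s22 * f₁ i - s12 * f₂ i) / det, ?_, ?_⟩
  · have e1 : ∀ i : Fin n, f₁ i * ((s22 * f₁ i - s12 * f₂ i) / det)
        = (s22 * (f₁ i * f₁ i) - s12 * (f₁ i * f₂ i)) / det := fun i => by ring
    rw [Finset.sum_congr rfl fun i _ => e1 i, ← Finset.sum_div, Finset.sum_sub_distrib,
      ← Finset.mul_sum, ← Finset.mul_sum, ← hs11, ← hs12]
    rw [div_eq_one_iff_eq (ne_of_gt hdetpos), hdet]; ring
  · have e2 : ∀ i : Fin n, f₂ i * ((s22 * f₁ i - s12 * f₂ i) / det)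
        = (s22 * (f₁ i * f₂ i) - s12 * (f₂ i * f₂ i)) / det := fun i => by ring
    rw [Finset.sum_congr rfl fun i _ => e2 i, ← Finset.sum_div, Finset.sum_sub_distrib,
      ← Finset.mul_sum, ← Finset.mul_sum, ← hs12, ← hs22]
    rw [div_eq_zero_iff]; left; ring

/-- Pushforward of Haar probability by a surjective continuous hom
between compact groups is Haar probability. -/
lemma map_volume_eq_volume {G H : Type*}
    [AddCommGroup G] [TopologicalSpace G] [IsTopologicalAddGroup G] [CompactSpace G]
    [MeasureSpace G] [BorelSpace G]
    [Measure.IsAddHaarMeasure (volume : Measure G)] [IsProbabilityMeasure (volume : Measure G)]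
    [AddCommGroup H] [TopologicalSpace H] [IsTopologicalAddGroup H] [CompactSpace H]
    [T2Space H] [MeasureSpace H] [BorelSpace H]
    [Measure.IsAddHaarMeasure (volume : Measure H)] [IsProbabilityMeasure (volume : Measure H)]
    (f : G →+ H) (hf : Continuous f) (hs : Function.Surjective f) :
    Measure.map f (volume : Measure G) = volume := by
  have h1 : Measure.IsAddHaarMeasure (Measure.map f (volume : Measure G)) :=
    Measure.isAddHaarMeasure_map_of_isFiniteMeasure volume f hf hs
  have h2 : IsProbabilityMeasure (Measure.map f (volume : Measure G)) :=
    Measure.isProbabilityMeasure_map hf.measurable.aemeasurable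
  exact Measure.isAddHaarMeasure_eq_of_isProbabilityMeasure _ _

instance : IsProbabilityMeasure (volume : Measure (AddCircle (1:ℝ))) :=
  ⟨by simp⟩

section comb

variable (m n : ℕ)

/-- The hom `X ↦ (j ↦ ∑ i, c i • X i j)`. -/
noncomputable def combHom (c : Fin n → ℕ) : (Fin n → Fin m → AddCircle (1:ℝ)) →+ (Fin m → AddCircle (1:ℝ)) where
  toFun X := fun j => ∑ i, c i • X i j
  map_zero' := by funext j; simp
  map_add' X Y := by
    funext j
    simp [smul_add, Finset.sum_add_distrib]

lemma combHom_continuous (c : Fin n → ℕ) : Continuous (combHom m n c) := by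
  refine continuous_pi fun j => ?_
  show Continuous fun X : Fin n → Fin m → AddCircle (1:ℝ) => ∑ i, c i • X i j
  refine continuous_finset_sum _ fun i _ => ?_
  exact (continuous_nsmul (c i)).comp ((continuous_apply j).comp (continuous_apply i))

lemma combHom_coe (c : Fin n → ℕ) (Y : Fin n → Fin m → ℝ) (j : Fin m) :
    combHom m n c (fun i k => ((Y i k : ℝ) : AddCircle (1:ℝ))) j
      = ((∑ i, (c i : ℝ) * Y i j : ℝ) : AddCircle (1:ℝ)) := by
  show ∑ i, c i • ((Y i j : ℝ) : AddCircle (1:ℝ)) = _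
  have e : ∀ i : Fin n, c i • ((Y i j : ℝ) : AddCircle (1:ℝ))
      = (((c i : ℝ) * Y i j : ℝ) : AddCircle (1:ℝ)) := fun i => by
    rw [← AddCircle.coe_nsmul, nsmul_eq_mul]
  rw [Finset.sum_congr rfl fun i _ => e i]
  exact (map_sum (QuotientAddGroup.mk' (AddSubgroup.zmultiples (1:ℝ)))
    (fun i : Fin n => (c i : ℝ) * Y i j) Finset.univ).symm

end comb


lemma liftSet_countable (m : ℕ) (P : ℕ → Finset (Fin m → ℝ)) (d : ℕ) :
    (liftSet m P d).Countable := by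
  have : liftSet m P d ⊆ ⋃ p ∈ (P d : Set (Fin m → ℝ)),
      Set.range (fun k : Fin m → ℤ => p + (d : ℝ) • fun j => ((k j : ℤ) : ℝ)) := by
    rintro x ⟨p, hp, k, rfl⟩
    exact Set.mem_biUnion hp ⟨k, rfl⟩
  exact Set.Countable.mono this <|
    (Set.Finite.countable (P d).finite_toSet).biUnion fun p _ => Set.countable_range _

/-- The one-dimensional target set in `(ℝ/ℤ)^m`, scaled down by `d`. -/
def Sset (m : ℕ) (P : ℕ → Finset (Fin m → ℝ)) (d : ℕ) (r : ℝ) : Set (Fin m → AddCircle (1:ℝ)) :=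
  ⋃ z ∈ liftSet m P d,
    (fun s : Fin m → ℝ => fun j => ((s j : ℝ) : AddCircle (1:ℝ))) ''
      Metric.closedBall ((d:ℝ)⁻¹ • z) (r / d)

lemma Sset_measurable (m : ℕ) (P : ℕ → Finset (Fin m → ℝ)) (d : ℕ) (r : ℝ) :
    MeasurableSet (Sset m P d r) := by
  refine MeasurableSet.biUnion (liftSet_countable m P d) fun z _ => ?_
  have hcont : Continuous (fun s : Fin m → ℝ => fun j => ((s j : ℝ) : AddCircle (1:ℝ))) :=
    continuous_pi fun j => (AddCircle.continuous_mk' 1).comp (continuous_apply j)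
  exact ((isCompact_closedBall _ _).image hcont).measurableSet

lemma norm_scale {m : ℕ} (d : ℕ) (hd : 0 < d) (w z : Fin m → ℝ) (r : ℝ) :
    ‖(fun j => (d:ℝ) * w j) - z‖ ≤ r ↔ w ∈ Metric.closedBall ((d:ℝ)⁻¹ • z) (r / d) := by
  have hd' : (0:ℝ) < d := by positivity
  rw [Metric.mem_closedBall, dist_eq_norm]
  have he : (fun j => (d:ℝ) * w j) - z = (d:ℝ) • (w - (d:ℝ)⁻¹ • z) := by
    funext j
    simp only [Pi.sub_apply, Pi.smul_apply, smul_eq_mul, smul_sub]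
    field_simp
  rw [he, norm_smul, Real.norm_eq_abs, abs_of_pos hd']
  rw [← le_div_iff₀' hd']

lemma approxSet_eq_preimage (m n : ℕ) (P : ℕ → Finset (Fin m → ℝ)) (q : Fin n → ℕ) (r : ℝ)
    (hd : 0 < Finset.univ.gcd q) :
    approxSet m n P q r
      = combHom m n (fun i => q i / Finset.univ.gcd q) ⁻¹'
          Sset m P (Finset.univ.gcd q) r := by
  set d : ℕ := Finset.univ.gcd q with hdd
  set c : Fin n → ℕ := fun i => q i / d with hcc
  have hdc : ∀ i, q i = d * c i := fun i =>
    (Nat.mul_div_cancel' (Finset.gcd_dvd (Finset.mem_univ i))).symm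
  have hdcR : ∀ i, (q i : ℝ) = (d : ℝ) * (c i : ℝ) := fun i => by
    rw [hdc i]; push_cast; ring
  have hgcd1 : Finset.univ.gcd c = 1 := by
    have h1 : Finset.univ.gcd (fun i => d * c i) = d * Finset.univ.gcd c := by
      simpa using (Finset.gcd_mul_left (s := (Finset.univ : Finset (Fin n))) (f := c) (a := d))
    have h2 : Finset.univ.gcd (fun i => d * c i) = d := by
      rw [show (fun i => d * c i) = q from funext fun i => (hdc i).symm]
    have := h1.symm.trans h2
    exact mul_left_cancel₀ (Nat.pos_iff_ne_zero.1 hd) (by rw [this, mul_one])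
  ext X
  constructor
  · rintro ⟨Y, hY, z, hz, hnorm⟩
    have hXY : X = fun i k => ((Y i k : ℝ) : AddCircle (1:ℝ)) := by
      funext i k; exact (hY i k).symm
    set s : Fin m → ℝ := fun j => ∑ i, (c i : ℝ) * Y i j with hss
    have hcomb : ∀ j, combHom m n c X j = ((s j : ℝ) : AddCircle (1:ℝ)) := by
      intro j; rw [hXY]; exact combHom_coe m n c Y j
    have hsball : s ∈ Metric.closedBall ((d:ℝ)⁻¹ • z) (r / d) := by
      rw [← norm_scale d hd]
      have : (fun j => (d:ℝ) * s j) = fun j => ∑ i, (q i : ℝ) * Y i j := by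
        funext j
        rw [hss, Finset.mul_sum]
        exact Finset.sum_congr rfl fun i _ => by rw [hdcR i]; ring
      rw [this]
      exact hnorm
    refine Set.mem_preimage.2 (Set.mem_biUnion hz ⟨s, hsball, ?_⟩)
    funext j
    exact (hcomb j).symm
  · intro hX
    obtain ⟨z, hz, s, hsball, himg⟩ := by
      simpa only [Sset, Set.mem_iUnion, Set.mem_image, exists_prop] using Set.mem_preimage.1 hX
    -- choose lifts of X
    have hsur : ∀ i j, ∃ y : ℝ, ((y : ℝ) : AddCircle (1:ℝ)) = X i j := fun i j =>
      QuotientAddGroup.mk'_surjective (AddSubgroup.zmultiples (1:ℝ)) (X i j)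
    choose Y0 hY0 using fun i => hsur i
    have hXY0 : X = fun i k => ((Y0 i k : ℝ) : AddCircle (1:ℝ)) := by
      funext i k; exact (hY0 i k).symm
    -- the integer discrepancy
    have hdisc : ∀ j, ∃ t : ℤ, s j - ∑ i, (c i : ℝ) * Y0 i j = (t : ℝ) := by
      intro j
      have h1 : ((s j : ℝ) : AddCircle (1:ℝ)) = ((∑ i, (c i : ℝ) * Y0 i j : ℝ) : AddCircle (1:ℝ)) := by
        rw [← combHom_coe m n c Y0 j, ← hXY0, ← himg]
      have h2 : ((s j - ∑ i, (c i : ℝ) * Y0 i j : ℝ) : AddCircle (1:ℝ)) = 0 := by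
        rw [AddCircle.coe_sub, h1, sub_self]
      obtain ⟨t, ht⟩ := (AddCircle.coe_eq_zero_iff (1:ℝ)).1 h2
      exact ⟨t, by rw [← ht, zsmul_eq_mul, mul_one]⟩
    choose t ht using hdisc
    -- Bezout
    obtain ⟨e, he⟩ := finset_gcd_bezout Finset.univ c
    rw [hgcd1] at he
    have heR : ∑ i, (c i : ℝ) * (e i : ℝ) = 1 := by
      have := congrArg (fun x : ℤ => (x : ℝ)) he
      push_cast at this
      simpa using this
    refine ⟨fun i j => Y0 i j + ((e i * t j : ℤ) : ℝ), ?_, z, hz, ?_⟩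
    · intro i j
      have hz0 : (((e i * t j : ℤ) : ℝ) : AddCircle (1:ℝ)) = 0 := by
        rw [AddCircle.coe_eq_zero_iff]
        exact ⟨e i * t j, by rw [zsmul_eq_mul, mul_one]⟩
      rw [AddCircle.coe_add, hz0, add_zero]
      exact hY0 i j
    · have key : (fun j => ∑ i, (q i : ℝ) * (Y0 i j + ((e i * t j : ℤ) : ℝ)))
          = fun j => (d : ℝ) * s j := by
        funext j
        have expand : ∑ i, (q i : ℝ) * (Y0 i j + ((e i * t j : ℤ) : ℝ))
            = (d:ℝ) * (∑ i, (c i : ℝ) * Y0 i j) + (d:ℝ) * (t j : ℝ) * (∑ i, (c i : ℝ) * (e i : ℝ)) := by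
          rw [Finset.mul_sum, Finset.mul_sum, ← Finset.sum_add_distrib]
          refine Finset.sum_congr rfl fun i _ => ?_
          rw [hdcR i]; push_cast; ring
        rw [expand, heR, mul_one]
        have := ht j
        nlinarith [ht j]
      rw [key, norm_scale d hd]
      exact hsball

lemma combHom_surjective (m n : ℕ) (c₁ c₂ : Fin n → ℕ) (a b : Fin n → ℝ)
    (h11 : ∑ i, (c₁ i : ℝ) * a i = 1) (h21 : ∑ i, (c₂ i : ℝ) * a i = 0)
    (h12 : ∑ i, (c₁ i : ℝ) * b i = 0) (h22 : ∑ i, (c₂ i : ℝ) * b i = 1) :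
    Function.Surjective ⇑((combHom m n c₁).prod (combHom m n c₂)) := by
  rintro ⟨u, v⟩
  have hsur : ∀ j, ∃ y : ℝ, ((y : ℝ) : AddCircle (1:ℝ)) = u j := fun j =>
    QuotientAddGroup.mk'_surjective (AddSubgroup.zmultiples (1:ℝ)) (u j)
  have hsur' : ∀ j, ∃ y : ℝ, ((y : ℝ) : AddCircle (1:ℝ)) = v j := fun j =>
    QuotientAddGroup.mk'_surjective (AddSubgroup.zmultiples (1:ℝ)) (v j)
  choose s hs using hsur
  choose t ht using hsur'
  set Y : Fin n → Fin m → ℝ := fun i j => a i * s j + b i * t j with hYY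
  refine ⟨fun i j => ((Y i j : ℝ) : AddCircle (1:ℝ)), ?_⟩
  have key : ∀ (c : Fin n → ℕ) (α β : ℝ), (∑ i, (c i : ℝ) * a i = α) →
      (∑ i, (c i : ℝ) * b i = β) → ∀ j,
      combHom m n c (fun i j => ((Y i j : ℝ) : AddCircle (1:ℝ))) j
        = ((α * s j + β * t j : ℝ) : AddCircle (1:ℝ)) := by
    intro c α β hα hβ j
    rw [combHom_coe m n c Y j]
    congr 1
    have : ∑ i, (c i : ℝ) * Y i j = (∑ i, (c i : ℝ) * a i) * s j + (∑ i, (c i : ℝ) * b i) * t j := by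
      rw [Finset.sum_mul, Finset.sum_mul, ← Finset.sum_add_distrib]
      exact Finset.sum_congr rfl fun i _ => by rw [hYY]; ring
    rw [this, hα, hβ]
  have h₁ : ∀ j, combHom m n c₁ (fun i j => ((Y i j : ℝ) : AddCircle (1:ℝ))) j = u j := by
    intro j
    rw [key c₁ 1 0 h11 h12 j]
    rw [show (1:ℝ) * s j + 0 * t j = s j by ring]
    exact hs j
  have h₂ : ∀ j, combHom m n c₂ (fun i j => ((Y i j : ℝ) : AddCircle (1:ℝ))) j = v j := by
    intro j
    rw [key c₂ 0 1 h21 h22 j]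
    rw [show (0:ℝ) * s j + 1 * t j = t j by ring]
    exact ht j
  exact Prod.ext (funext h₁) (funext h₂)

/-- **Independence for linearly independent directions.** If `q₁, q₂` are linearly
independent over `ℝ` and each one-dimensional set `A_{1,m}^P(gcd qᵢ, rᵢ)` is a union of
pairwise disjoint balls (the lifted points of `P(gcd qᵢ)` being `> 2rᵢ` separated), then
the sets `A_{n,m}^P(q₁,r₁)` and `A_{n,m}^P(q₂,r₂)` are independent. -/
theorem approxSet_independent (m n : ℕ) (hm : 1 ≤ m) (hn : 1 ≤ n)
    (P : ℕ → Finset (Fin m → ℝ))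
    (hrep : ∀ d : ℕ, 1 ≤ d → ∀ p ∈ P d, ∀ j, (0:ℝ) ≤ p j ∧ p j < d)
    (q₁ q₂ : Fin n → ℕ) (r₁ r₂ : ℝ) (hr₁ : 0 ≤ r₁) (hr₂ : 0 ≤ r₂)
    (hli : LinearIndependent ℝ
      ![(fun i => ((q₁ i : ℕ) : ℝ)), (fun i => ((q₂ i : ℕ) : ℝ))])
    (hsep₁ : ∀ x ∈ liftSet m P (Finset.univ.gcd q₁), ∀ y ∈ liftSet m P (Finset.univ.gcd q₁),
      x ≠ y → 2 * r₁ < ‖x - y‖)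
    (hsep₂ : ∀ x ∈ liftSet m P (Finset.univ.gcd q₂), ∀ y ∈ liftSet m P (Finset.univ.gcd q₂),
      x ≠ y → 2 * r₂ < ‖x - y‖) :
    volume (approxSet m n P q₁ r₁ ∩ approxSet m n P q₂ r₂)
      = volume (approxSet m n P q₁ r₁) * volume (approxSet m n P q₂ r₂) := by
  classical
  -- linear independence in explicit form
  have hP : ∀ s t : ℝ, s • (fun i => ((q₁ i : ℕ) : ℝ)) + t • (fun i => ((q₂ i : ℕ) : ℝ)) = 0
      → s = 0 ∧ t = 0 := LinearIndependent.pair_iff.1 hli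
  set f₁ : Fin n → ℝ := fun i => ((q₁ i : ℕ) : ℝ) with hf₁
  set f₂ : Fin n → ℝ := fun i => ((q₂ i : ℕ) : ℝ) with hf₂
  have hP' : ∀ s t : ℝ, s • f₂ + t • f₁ = 0 → s = 0 ∧ t = 0 := by
    intro s t h0
    have := hP t s (by rw [add_comm]; exact h0)
    exact ⟨this.2, this.1⟩
  -- positivity of gcds
  have hd₁ : 0 < Finset.univ.gcd q₁ := by
    rcases Nat.eq_zero_or_pos (Finset.univ.gcd q₁) with h0 | h
    · exfalso
      have hq0 : ∀ i, q₁ i = 0 := fun i =>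
        Finset.gcd_eq_zero_iff.1 h0 i (Finset.mem_univ i)
      have : (1:ℝ) = 0 := (hP 1 0 (by funext i; simp [hf₁, hq0 i])).1
      norm_num at this
    · exact h
  have hd₂ : 0 < Finset.univ.gcd q₂ := by
    rcases Nat.eq_zero_or_pos (Finset.univ.gcd q₂) with h0 | h
    · exfalso
      have hq0 : ∀ i, q₂ i = 0 := fun i =>
        Finset.gcd_eq_zero_iff.1 h0 i (Finset.mem_univ i)
      have : (1:ℝ) = 0 := (hP 0 1 (by funext i; simp [hf₂, hq0 i])).2
      norm_num at this
    · exact h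
  set d₁ : ℕ := Finset.univ.gcd q₁ with hdd₁
  set d₂ : ℕ := Finset.univ.gcd q₂ with hdd₂
  set c₁ : Fin n → ℕ := fun i => q₁ i / d₁ with hcc₁
  set c₂ : Fin n → ℕ := fun i => q₂ i / d₂ with hcc₂
  have hdcR₁ : ∀ i, (q₁ i : ℝ) = (d₁ : ℝ) * (c₁ i : ℝ) := fun i => by
    rw [hcc₁, show q₁ i = d₁ * (q₁ i / d₁) from
      (Nat.mul_div_cancel' (Finset.gcd_dvd (Finset.mem_univ i))).symm]
    push_cast
    rfl
  have hdcR₂ : ∀ i, (q₂ i : ℝ) = (d₂ : ℝ) * (c₂ i : ℝ) := fun i => by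
    rw [hcc₂, show q₂ i = d₂ * (q₂ i / d₂) from
      (Nat.mul_div_cancel' (Finset.gcd_dvd (Finset.mem_univ i))).symm]
    push_cast
    rfl
  -- dual vectors
  obtain ⟨a, ha1, ha2⟩ := exists_dual_vec f₁ f₂ hP
  obtain ⟨b, hb2, hb1⟩ := exists_dual_vec f₂ f₁ hP'
  set A : Fin n → ℝ := fun i => (d₁ : ℝ) * a i with hAA
  set B : Fin n → ℝ := fun i => (d₂ : ℝ) * b i with hBB
  have hd₁R : (0:ℝ) < d₁ := by exact_mod_cast hd₁
  have hd₂R : (0:ℝ) < d₂ := by exact_mod_cast hd₂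
  have h11 : ∑ i, (c₁ i : ℝ) * A i = 1 := by
    rw [← ha1]
    refine Finset.sum_congr rfl fun i _ => ?_
    show (c₁ i : ℝ) * ((d₁:ℝ) * a i) = f₁ i * a i
    rw [show f₁ i = ((q₁ i : ℕ) : ℝ) from rfl, hdcR₁ i]
    ring
  have h21 : ∑ i, (c₂ i : ℝ) * A i = 0 := by
    have key : ∀ i : Fin n, (d₂:ℝ) * ((c₂ i : ℝ) * A i) = (d₁:ℝ) * (f₂ i * a i) := by
      intro i
      show (d₂:ℝ) * ((c₂ i:ℝ) * ((d₁:ℝ) * a i)) = (d₁:ℝ) * (((q₂ i : ℕ):ℝ) * a i)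
      rw [hdcR₂ i]; ring
    have hz : (d₂:ℝ) * ∑ i, (c₂ i : ℝ) * A i = 0 := by
      rw [Finset.mul_sum, Finset.sum_congr rfl fun i _ => key i, ← Finset.mul_sum, ha2, mul_zero]
    exact (mul_eq_zero.1 hz).resolve_left (ne_of_gt hd₂R)
  have h12 : ∑ i, (c₁ i : ℝ) * B i = 0 := by
    have key : ∀ i : Fin n, (d₁:ℝ) * ((c₁ i : ℝ) * B i) = (d₂:ℝ) * (f₁ i * b i) := by
      intro i
      show (d₁:ℝ) * ((c₁ i:ℝ) * ((d₂:ℝ) * b i)) = (d₂:ℝ) * (((q₁ i : ℕ):ℝ) * b i)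
      rw [hdcR₁ i]; ring
    have hz : (d₁:ℝ) * ∑ i, (c₁ i : ℝ) * B i = 0 := by
      rw [Finset.mul_sum, Finset.sum_congr rfl fun i _ => key i, ← Finset.mul_sum, hb1, mul_zero]
    exact (mul_eq_zero.1 hz).resolve_left (ne_of_gt hd₁R)
  have h22 : ∑ i, (c₂ i : ℝ) * B i = 1 := by
    rw [← hb2]
    refine Finset.sum_congr rfl fun i _ => ?_
    show (c₂ i : ℝ) * ((d₂:ℝ) * b i) = f₂ i * b i
    rw [show f₂ i = ((q₂ i : ℕ) : ℝ) from rfl, hdcR₂ i]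
    ring
  -- the joint homomorphism
  set Φ : (Fin n → Fin m → AddCircle (1:ℝ)) →+
      (Fin m → AddCircle (1:ℝ)) × (Fin m → AddCircle (1:ℝ)) :=
    (combHom m n c₁).prod (combHom m n c₂) with hΦΦ
  have hΦcont : Continuous ⇑Φ := by
    rw [hΦΦ]
    exact (combHom_continuous m n c₁).prodMk (combHom_continuous m n c₂)
  have hΦsurj : Function.Surjective ⇑Φ :=
    combHom_surjective m n c₁ c₂ A B h11 h21 h12 h22
  have hsurj₁ : Function.Surjective ⇑(combHom m n c₁) := by
    intro u
    obtain ⟨X, hX⟩ := hΦsurj (u, 0)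
    exact ⟨X, congrArg Prod.fst hX⟩
  have hsurj₂ : Function.Surjective ⇑(combHom m n c₂) := by
    intro u
    obtain ⟨X, hX⟩ := hΦsurj (0, u)
    exact ⟨X, congrArg Prod.snd hX⟩
  -- instances
  haveI hpB : BorelSpace (Fin n → Fin m → AddCircle (1:ℝ)) := Pi.borelSpace
  haveI hpB2 : BorelSpace ((Fin m → AddCircle (1:ℝ)) × (Fin m → AddCircle (1:ℝ))) :=
    Prod.borelSpace
  haveI : Measure.IsAddHaarMeasure
      (((volume : Measure (Fin m → AddCircle (1:ℝ)))).prod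
        (volume : Measure (Fin m → AddCircle (1:ℝ)))) :=
    Measure.prod.instIsAddHaarMeasure _ _
  haveI hH : Measure.IsAddHaarMeasure
      (volume : Measure ((Fin m → AddCircle (1:ℝ)) × (Fin m → AddCircle (1:ℝ)))) := by
    rw [Measure.volume_eq_prod]
    infer_instance
  haveI hGH : Measure.IsAddHaarMeasure (volume : Measure (Fin n → Fin m → AddCircle (1:ℝ))) :=
    Measure.pi.isAddHaarMeasure _
  -- pushforward identities
  have hmapΦ : Measure.map ⇑Φ volume = volume :=
    map_volume_eq_volume Φ hΦcont hΦsurj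
  have hmap₁ : Measure.map ⇑(combHom m n c₁) volume = volume :=
    map_volume_eq_volume _ (combHom_continuous m n c₁) hsurj₁
  have hmap₂ : Measure.map ⇑(combHom m n c₂) volume = volume :=
    map_volume_eq_volume _ (combHom_continuous m n c₂) hsurj₂
  -- rewrite the sets
  have hA₁ := approxSet_eq_preimage m n P q₁ r₁ hd₁
  have hA₂ := approxSet_eq_preimage m n P q₂ r₂ hd₂
  set S₁ := Sset m P d₁ r₁ with hSS₁
  set S₂ := Sset m P d₂ r₂ with hSS₂
  have hS₁ : MeasurableSet S₁ := Sset_measurable m P d₁ r₁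
  have hS₂ : MeasurableSet S₂ := Sset_measurable m P d₂ r₂
  have hinter : approxSet m n P q₁ r₁ ∩ approxSet m n P q₂ r₂ = ⇑Φ ⁻¹' (S₁ ×ˢ S₂) := by
    rw [hA₁, hA₂]
    rw [hΦΦ]
    ext X
    simp [AddMonoidHom.prod_apply, Set.mem_prod]
    exact Iff.rfl
  have e1 : volume (approxSet m n P q₁ r₁ ∩ approxSet m n P q₂ r₂) = volume S₁ * volume S₂ := by
    rw [hinter, ← Measure.map_apply hΦcont.measurable (hS₁.prod hS₂), hmapΦ,
      Measure.volume_eq_prod, Measure.prod_prod]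
  have e2 : volume (approxSet m n P q₁ r₁) = volume S₁ := by
    rw [hA₁, ← Measure.map_apply (combHom_continuous m n c₁).measurable hS₁, hmap₁]
  have e3 : volume (approxSet m n P q₂ r₂) = volume S₂ := by
    rw [hA₂, ← Measure.map_apply (combHom_continuous m n c₂).measurable hS₂, hmap₂]
  rw [e1, e2, e3]
end
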